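/- Let φ be a flow on a compact metric space (M,d), let σ be a fixed point of φ that is ρ-isolated for some ρ > 0, and suppose the stable set W^s(σ) has empty interior in M. Then every point of W^s(σ) is a sensitive point with constant ρ: for every x ∈ W^s(σ) and every neighborhood U of x there exist y ∈ U and t ≥ 0 such that d(φ_t(x),φ_t(y)) > ρ. -/

import Mathlib

open Filter Topology

/-- The stable set of a point `σ` under a flow `φ`. -/
def stableSet {M : Type*} [MetricSpace M] (φ : Flow ℝ M) (σ : M) : Set M :=
  {x | Tendsto (fun t : ℝ => φ t x) atTop (𝓝 σ)}

/-- If `σ` is a `ρ`-isolated fixed point of a flow `φ` on a compact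
metric space whose stable set has empty interior, then every point of `W^s(σ)`
is a sensitive point with constant `ρ`. -/
theorem stmt2 {M : Type*} [MetricSpace M] [CompactSpace M] (φ : Flow ℝ M)
    (σ : M) (hfix : ∀ t : ℝ, φ t σ = σ) (ρ : ℝ) (hρ : 0 < ρ)
    (hiso : ∀ x : M, (∀ t : ℝ, φ t x ∈ Metric.closedBall σ ρ) → x = σ)
    (hint : interior (stableSet φ σ) = ∅) :
    ∀ x ∈ stableSet φ σ, ∀ U ∈ 𝓝 x,
      ∃ y ∈ U, ∃ t : ℝ, 0 ≤ t ∧ ρ < dist (φ t x) (φ t y) := by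
  intro x hx U hU
  by_contra h
  push_neg at h
  -- h : ∀ y ∈ U, ∀ t, 0 ≤ t → dist (φ t x) (φ t y) ≤ ρ
  have hUne : ¬ U ⊆ stableSet φ σ := by
    intro hsub
    have : x ∈ interior (stableSet φ σ) :=
      mem_interior_iff_mem_nhds.mpr (Filter.mem_of_superset hU hsub)
    simp [hint] at this
  obtain ⟨y, hyU, hyns⟩ := Set.not_subset.mp hUne
  apply hyns
  rw [stableSet, Set.mem_setOf_eq, Metric.tendsto_atTop]
  by_contra hT
  push_neg at hT
  obtain ⟨ε, hε, hseq⟩ := hT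
  choose t ht hd using hseq
  set u : ℕ → M := fun n => φ (t n) y with hu
  obtain ⟨z, -, g, hg, hgz⟩ := isCompact_univ.tendsto_subseq (fun n => Set.mem_univ (u n))
  have htop : Tendsto (fun n : ℕ => t (g n)) atTop atTop := by
    apply tendsto_atTop_mono (fun n => le_trans (Nat.cast_le.mpr (hg.id_le n)) (ht (g n)))
    exact tendsto_natCast_atTop_atTop
  have hzball : ∀ s : ℝ, φ s z ∈ Metric.closedBall σ ρ := by
    intro s
    have hcont : Continuous fun w : M => φ s w :=
      φ.continuous continuous_const continuous_id
    have h1 : Tendsto (fun n => φ s (u (g n))) atTop (𝓝 (φ s z)) :=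
      (hcont.continuousAt.tendsto).comp hgz
    have h1' : Tendsto (fun n => φ (s + t (g n)) y) atTop (𝓝 (φ s z)) := by
      simpa [hu, φ.map_add] using h1
    have hstop : Tendsto (fun n : ℕ => s + t (g n)) atTop atTop :=
      tendsto_atTop_add_const_left _ s htop
    have hxσ : Tendsto (fun n => dist (φ (s + t (g n)) x) σ) atTop (𝓝 0) := by
      have := (tendsto_iff_dist_tendsto_zero.mp hx).comp hstop
      exact this
    have hdist : Tendsto (fun n => dist (φ (s + t (g n)) y) σ) atTop (𝓝 (dist (φ s z) σ)) :=
      (Continuous.dist continuous_id continuous_const).continuousAt.tendsto.comp h1'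
    have hbd : Tendsto (fun n => ρ + dist (φ (s + t (g n)) x) σ) atTop (𝓝 (ρ + 0)) :=
      tendsto_const_nhds.add hxσ
    have hle : dist (φ s z) σ ≤ ρ + 0 := by
      refine le_of_tendsto_of_tendsto hdist hbd ?_
      filter_upwards [hstop.eventually_ge_atTop 0] with n hn
      calc dist (φ (s + t (g n)) y) σ
          ≤ dist (φ (s + t (g n)) y) (φ (s + t (g n)) x) + dist (φ (s + t (g n)) x) σ :=
            dist_triangle _ _ _
        _ ≤ ρ + dist (φ (s + t (g n)) x) σ := by
            have := h y hyU (s + t (g n)) hn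
            rw [dist_comm]
            linarith
    simpa using hle
  have hzσ : z = σ := hiso z hzball
  have hεz : ε ≤ dist z σ := by
    have hdz : Tendsto (fun n => dist (u (g n)) σ) atTop (𝓝 (dist z σ)) :=
      (Continuous.dist continuous_id continuous_const).continuousAt.tendsto.comp hgz
    exact ge_of_tendsto' hdz (fun n => hd (g n))
  rw [hzσ, dist_self] at hεz
  linarith
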